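/- Let Δ ∈ ℚ[x_1,…,x_n,y_1,…,y_n] be a nonzero polynomial that is bihomogeneous of degree a in the x-variables and degree b in the y-variables, and let M be the ℚ-linear span of Δ and all its partial derivatives of all orders. Then the map flip : P ↦ P(∂_{x_1},…,∂_{x_n},∂_{y_1},…,∂_{y_n})Δ is a ℚ-linear bijection of M onto M which maps the bihomogeneous component H_{h,k}(M) bijectively onto H_{a−h,b−k}(M); in particular dim_ℚ H_{h,k}(M) = dim_ℚ H_{a−h,b−k}(M) for all h, k. -/

import Mathlib

open MvPolynomial

/-- The linear span of a polynomial `Δ` together with all of its partial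
derivatives of all orders. -/
noncomputable def derivSpan (n : ℕ) (Δ : MvPolynomial (Fin n ⊕ Fin n) ℚ) :
    Submodule ℚ (MvPolynomial (Fin n ⊕ Fin n) ℚ) :=
  Submodule.span ℚ
    {P | ∃ L : List (Fin n ⊕ Fin n), P = L.foldr (fun v Q => pderiv v Q) Δ}

/-- The differential operator `∂^d = ∏_v ∂_v^{d v}` (the factors commute, so the
order of the product is immaterial). -/
noncomputable def derivMonomial (n : ℕ) (d : (Fin n ⊕ Fin n) →₀ ℕ) :
    Module.End ℚ (MvPolynomial (Fin n ⊕ Fin n) ℚ) :=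
  (d.support.toList.map fun v =>
    ((pderiv v).toLinearMap : Module.End ℚ (MvPolynomial (Fin n ⊕ Fin n) ℚ)) ^ d v).prod

/-- `P(∂) Q`: the result of applying to `Q` the differential operator obtained
by substituting `∂_{x_i}` for `x_i` and `∂_{y_i}` for `y_i` in `P`. -/
noncomputable def applyDiff (n : ℕ)
    (P Q : MvPolynomial (Fin n ⊕ Fin n) ℚ) : MvPolynomial (Fin n ⊕ Fin n) ℚ :=
  ∑ d ∈ P.support, coeff d P • derivMonomial n d Q

/-- Total degree in the `x`-variables of a monomial exponent vector. -/
def xdeg (n : ℕ) (d : (Fin n ⊕ Fin n) →₀ ℕ) : ℕ := ∑ i : Fin n, d (Sum.inl i)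

/-- Total degree in the `y`-variables of a monomial exponent vector. -/
def ydeg (n : ℕ) (d : (Fin n ⊕ Fin n) →₀ ℕ) : ℕ := ∑ i : Fin n, d (Sum.inr i)

/-- The bihomogeneous component `H_{h,k}(W)`: elements of `W` which are
bihomogeneous of degree `h` in the `x`-variables and `k` in the `y`-variables
(indexed by integers; for negative `h` or `k` only `0` qualifies). -/
def biComponent (n : ℕ) (h k : ℤ) (W : Set (MvPolynomial (Fin n ⊕ Fin n) ℚ)) :
    Set (MvPolynomial (Fin n ⊕ Fin n) ℚ) :=
  {P ∈ W | ∀ d, coeff d P ≠ 0 → (xdeg n d : ℤ) = h ∧ (ydeg n d : ℤ) = k}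


lemma coeff_pderiv' {σ : Type*} [DecidableEq σ] (v : σ) (e : σ →₀ ℕ) (Q : MvPolynomial σ ℚ) :
    coeff e (pderiv v Q) = ((e v : ℚ) + 1) * coeff (e + Finsupp.single v 1) Q := by
  induction Q using MvPolynomial.induction_on' with
  | monomial d c =>
    rw [pderiv_monomial, coeff_monomial, coeff_monomial]
    by_cases h : d = e + Finsupp.single v 1
    · subst h
      rw [if_pos (by rw [add_tsub_cancel_right])]
      simp [Finsupp.add_apply, Finsupp.single_apply]
      ring
    · rw [if_neg h, mul_zero]
      by_cases h2 : d - Finsupp.single v 1 = e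
      · rw [if_pos h2]
        have hdv : d v = 0 := by
          by_contra hdv
          apply h
          ext w
          have := DFunLike.congr_fun h2 w
          by_cases hw : w = v
          · subst hw
            simp [Finsupp.tsub_apply, Finsupp.single_apply] at this ⊢
            omega
          · simp [Finsupp.tsub_apply, Finsupp.single_apply, hw, Ne.symm hw] at this ⊢
            omega
        rw [hdv]
        simp
      · rw [if_neg h2]
  | add P Q hP hQ => simp [coeff_add, hP, hQ]; ring

lemma descF_mul_fact : ∀ (b a : ℕ), (a + b).descFactorial b * Nat.factorial a = Nat.factorial (a + b) := by
  intro b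
  induction b with
  | zero => intro a; simp
  | succ k ih =>
    intro a
    have h : a + (k + 1) = (a + k) + 1 := by omega
    rw [h, Nat.succ_descFactorial_succ, Nat.factorial_succ, mul_assoc, ih a]

lemma descF_add (a b c : ℕ) :
    (a + (b + c)).descFactorial (b + c) =
      (a + b).descFactorial b * (a + b + c).descFactorial c := by
  apply Nat.eq_of_mul_eq_mul_right (Nat.factorial_pos a)
  rw [descF_mul_fact (b + c) a, mul_right_comm, descF_mul_fact b a, mul_comm,
    descF_mul_fact c (a + b)]
  congr 1
  omega

lemma descF_succ' (m k : ℕ) :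
    (m + k + 1).descFactorial (k + 1) = (m + 1) * ((m + 1 + k).descFactorial k) := by
  have h : m + k + 1 = m + 1 + k := by omega
  rw [h, Nat.descFactorial_succ]
  congr 1
  omega

lemma coeff_pderiv_pow {σ : Type*} [DecidableEq σ] (v : σ) (k : ℕ) (e : σ →₀ ℕ)
    (Q : MvPolynomial σ ℚ) :
    coeff e ((((pderiv v).toLinearMap : Module.End ℚ (MvPolynomial σ ℚ)) ^ k) Q) =
      (((e v + k).descFactorial k : ℕ) : ℚ) * coeff (e + Finsupp.single v k) Q := by
  induction k generalizing e with
  | zero => simp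
  | succ k ih =>
    rw [pow_succ', Module.End.mul_apply]
    have happ : (((pderiv v).toLinearMap : Module.End ℚ (MvPolynomial σ ℚ)))
        ((((pderiv v).toLinearMap : Module.End ℚ (MvPolynomial σ ℚ)) ^ k) Q)
        = pderiv v ((((pderiv v).toLinearMap : Module.End ℚ (MvPolynomial σ ℚ)) ^ k) Q) := rfl
    rw [happ, coeff_pderiv', ih]
    have h1 : ((e + Finsupp.single v 1 : σ →₀ ℕ)) v = e v + 1 := by
      simp [Finsupp.add_apply, Finsupp.single_apply]
    have h2 : e + Finsupp.single v 1 + Finsupp.single v k = e + Finsupp.single v (k + 1) := by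
      rw [add_assoc, ← Finsupp.single_add]
      congr 2
      omega
    rw [h1, h2]
    have h3 : (e v + (k + 1)).descFactorial (k + 1) = (e v + 1) * ((e v + 1 + k).descFactorial k) := by
      have harg : e v + (k + 1) = e v + k + 1 := by omega
      rw [harg]
      exact descF_succ' _ _
    rw [h3]
    push_cast
    ring

lemma coeff_listProd {σ : Type*} [DecidableEq σ] (d : σ →₀ ℕ) (Q : MvPolynomial σ ℚ) :
    ∀ (L : List σ), L.Nodup → ∀ (e : σ →₀ ℕ),
    coeff e ((L.map fun v =>
        ((pderiv v).toLinearMap : Module.End ℚ (MvPolynomial σ ℚ)) ^ d v).prod Q) =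
      (L.map fun v => (((e v + d v).descFactorial (d v) : ℕ) : ℚ)).prod *
        coeff (e + (L.map fun v => Finsupp.single v (d v)).sum) Q := by
  intro L
  induction L with
  | nil => intro _ e; simp
  | cons v T ih =>
    intro hnd e
    rw [List.nodup_cons] at hnd
    rw [List.map_cons, List.prod_cons, Module.End.mul_apply, coeff_pderiv_pow,
      ih hnd.2 (e + Finsupp.single v (d v))]
    have hmap : T.map (fun w => ((((e + Finsupp.single v (d v) : σ →₀ ℕ)) w + d w).descFactorial (d w) : ℚ))
        = T.map (fun w => (((e w + d w).descFactorial (d w) : ℕ) : ℚ)) := by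
      apply List.map_congr_left
      intro w hw
      have hne : v ≠ w := fun h => hnd.1 (h ▸ hw)
      simp [Finsupp.add_apply, Finsupp.single_apply, hne]
    rw [hmap, List.map_cons, List.prod_cons, List.map_cons, List.sum_cons, add_assoc]
    push_cast
    ring

/-- `∏_v (e v + d v)(e v + d v - 1)⋯(e v + 1)`. -/
def dfact {σ : Type*} (d e : σ →₀ ℕ) : ℕ :=
  ∏ v ∈ d.support, (e v + d v).descFactorial (d v)

lemma dfact_subset {σ : Type*} (d e : σ →₀ ℕ) {s : Finset σ} (hs : d.support ⊆ s) :
    dfact d e = ∏ v ∈ s, (e v + d v).descFactorial (d v) := by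
  apply Finset.prod_subset hs
  intro x _ hx
  have h0 : d x = 0 := Finsupp.notMem_support_iff.mp hx
  simp [h0]

lemma dfact_pos {σ : Type*} (d e : σ →₀ ℕ) : 0 < dfact d e := by
  apply Finset.prod_pos
  intro v _
  apply Nat.pos_of_ne_zero
  rw [Ne, Nat.descFactorial_eq_zero_iff_lt]
  omega

lemma coeff_derivMonomial (n : ℕ) (d e : (Fin n ⊕ Fin n) →₀ ℕ)
    (Q : MvPolynomial (Fin n ⊕ Fin n) ℚ) :
    coeff e (derivMonomial n d Q) = (dfact d e : ℚ) * coeff (e + d) Q := by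
  rw [derivMonomial, coeff_listProd d Q _ d.support.nodup_toList e]
  congr 1
  · rw [Finset.prod_map_toList, dfact, Nat.cast_prod]
  · congr 2
    rw [Finset.sum_map_toList]
    exact Finsupp.sum_single d

lemma dfact_add {σ : Type*} [DecidableEq σ] (d d' e : σ →₀ ℕ) :
    dfact (d + d') e = dfact d e * dfact d' (e + d) := by
  classical
  set s := d.support ∪ d'.support with hs
  rw [dfact_subset (d + d') e (Finsupp.support_add.trans le_rfl),
    dfact_subset d e (Finset.subset_union_left),
    dfact_subset d' (e + d) (Finset.subset_union_right), ← Finset.prod_mul_distrib]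
  apply Finset.prod_congr rfl
  intro w _
  simp only [Finsupp.add_apply]
  exact descF_add (e w) (d w) (d' w)

lemma derivMonomial_zero (n : ℕ) (Q : MvPolynomial (Fin n ⊕ Fin n) ℚ) :
    derivMonomial n 0 Q = Q := by
  rw [derivMonomial]
  simp

lemma derivMonomial_add (n : ℕ) (d d' : (Fin n ⊕ Fin n) →₀ ℕ)
    (Q : MvPolynomial (Fin n ⊕ Fin n) ℚ) :
    derivMonomial n (d + d') Q = derivMonomial n d (derivMonomial n d' Q) := by
  apply MvPolynomial.ext
  intro e
  rw [coeff_derivMonomial, coeff_derivMonomial, coeff_derivMonomial, dfact_add]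
  rw [show e + (d + d') = e + d + d' from (add_assoc e d d').symm]
  push_cast
  ring

lemma derivMonomial_single (n : ℕ) (v : Fin n ⊕ Fin n)
    (Q : MvPolynomial (Fin n ⊕ Fin n) ℚ) :
    derivMonomial n (Finsupp.single v 1) Q = pderiv v Q := by
  rw [derivMonomial, Finsupp.support_single_ne_zero v one_ne_zero]
  simp

/-- The exponent vector counting occurrences of each variable in a list. -/
noncomputable def listCount (n : ℕ) (L : List (Fin n ⊕ Fin n)) : (Fin n ⊕ Fin n) →₀ ℕ :=
  (L.map fun v => Finsupp.single v 1).sum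

lemma foldr_pderiv_eq (n : ℕ) (L : List (Fin n ⊕ Fin n))
    (Δ : MvPolynomial (Fin n ⊕ Fin n) ℚ) :
    L.foldr (fun v Q => pderiv v Q) Δ = derivMonomial n (listCount n L) Δ := by
  induction L with
  | nil =>
    have h0 : listCount n ([] : List (Fin n ⊕ Fin n)) = 0 := rfl
    rw [List.foldr_nil, h0, derivMonomial_zero]
  | cons v T ih =>
    have hc : listCount n (v :: T) = Finsupp.single v 1 + listCount n T := by
      simp [listCount]
    rw [hc, derivMonomial_add, List.foldr_cons, ih, ← derivMonomial_single n v]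

lemma exists_listCount (n : ℕ) (d : (Fin n ⊕ Fin n) →₀ ℕ) :
    ∃ L, listCount n L = d := by
  induction d using Finsupp.induction with
  | zero => exact ⟨[], by simp [listCount]⟩
  | single_add a bn f _ _ ih =>
    obtain ⟨L, hL⟩ := ih
    refine ⟨List.replicate bn a ++ L, ?_⟩
    have h1 : listCount n (List.replicate bn a ++ L) =
        listCount n (List.replicate bn a) + listCount n L := by
      simp [listCount]
    have h2 : listCount n (List.replicate bn a) = Finsupp.single a bn := by
      simp only [listCount, List.map_replicate, List.sum_replicate, smul_eq_mul]
      ext w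
      simp [Finsupp.single_apply]
    rw [h1, h2, hL]

lemma applyDiff_eq_sum_subset (n : ℕ) (P Q : MvPolynomial (Fin n ⊕ Fin n) ℚ)
    {s : Finset ((Fin n ⊕ Fin n) →₀ ℕ)} (hs : P.support ⊆ s) :
    applyDiff n P Q = ∑ d ∈ s, coeff d P • derivMonomial n d Q := by
  rw [applyDiff]
  apply Finset.sum_subset hs
  intro x _ hx
  rw [MvPolynomial.notMem_support_iff.mp hx, zero_smul]

lemma applyDiff_add_left (n : ℕ) (P P' Q : MvPolynomial (Fin n ⊕ Fin n) ℚ) :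
    applyDiff n (P + P') Q = applyDiff n P Q + applyDiff n P' Q := by
  classical
  set s := (P + P').support ∪ (P.support ∪ P'.support) with hs
  rw [applyDiff_eq_sum_subset n (P + P') Q (Finset.subset_union_left),
    applyDiff_eq_sum_subset n P Q
      (Finset.subset_union_left.trans Finset.subset_union_right),
    applyDiff_eq_sum_subset n P' Q
      (Finset.subset_union_right.trans Finset.subset_union_right),
    ← Finset.sum_add_distrib]
  apply Finset.sum_congr rfl
  intro d _
  rw [coeff_add, add_smul]

lemma applyDiff_smul_left (n : ℕ) (c : ℚ) (P Q : MvPolynomial (Fin n ⊕ Fin n) ℚ) :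
    applyDiff n (c • P) Q = c • applyDiff n P Q := by
  rw [applyDiff_eq_sum_subset n (c • P) Q (MvPolynomial.support_smul),
    applyDiff, Finset.smul_sum]
  apply Finset.sum_congr rfl
  intro d _
  rw [MvPolynomial.coeff_smul, smul_eq_mul, mul_smul]

/-- `flip` bundled as a linear map. -/
noncomputable def flipL (n : ℕ) (Δ : MvPolynomial (Fin n ⊕ Fin n) ℚ) :
    MvPolynomial (Fin n ⊕ Fin n) ℚ →ₗ[ℚ] MvPolynomial (Fin n ⊕ Fin n) ℚ where
  toFun P := applyDiff n P Δ
  map_add' P P' := applyDiff_add_left n P P' Δ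
  map_smul' c P := applyDiff_smul_left n c P Δ

lemma applyDiff_monomial_one (n : ℕ) (d : (Fin n ⊕ Fin n) →₀ ℕ)
    (Q : MvPolynomial (Fin n ⊕ Fin n) ℚ) :
    applyDiff n (monomial d (1 : ℚ)) Q = derivMonomial n d Q := by
  rw [applyDiff, support_monomial, if_neg (one_ne_zero)]
  rw [Finset.sum_singleton, coeff_monomial, if_pos rfl, one_smul]

lemma flipL_apply (n : ℕ) (Δ P : MvPolynomial (Fin n ⊕ Fin n) ℚ) :
    flipL n Δ P = applyDiff n P Δ := rfl

lemma range_flipL (n : ℕ) (Δ : MvPolynomial (Fin n ⊕ Fin n) ℚ) :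
    LinearMap.range (flipL n Δ) = derivSpan n Δ := by
  apply le_antisymm
  · rintro _ ⟨P, rfl⟩
    rw [flipL_apply, applyDiff]
    apply Submodule.sum_mem
    intro d _
    apply Submodule.smul_mem
    obtain ⟨L, hL⟩ := exists_listCount n d
    rw [← hL, ← foldr_pderiv_eq]
    exact Submodule.subset_span ⟨L, rfl⟩
  · rw [derivSpan, Submodule.span_le]
    rintro _ ⟨L, rfl⟩
    exact ⟨monomial (listCount n L) 1,
      by rw [flipL_apply, applyDiff_monomial_one, foldr_pderiv_eq]⟩

/-- `P(∂)` bundled as an endomorphism. -/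
noncomputable def applyDiffE (n : ℕ) (P : MvPolynomial (Fin n ⊕ Fin n) ℚ) :
    Module.End ℚ (MvPolynomial (Fin n ⊕ Fin n) ℚ) :=
  ∑ d ∈ P.support, coeff d P • derivMonomial n d

lemma applyDiffE_apply (n : ℕ) (P Q : MvPolynomial (Fin n ⊕ Fin n) ℚ) :
    applyDiffE n P Q = applyDiff n P Q := by
  rw [applyDiffE, applyDiff, LinearMap.sum_apply]
  apply Finset.sum_congr rfl
  intro d _
  rw [LinearMap.smul_apply]

lemma derivMonomial_applyDiffE (n : ℕ) (e : (Fin n ⊕ Fin n) →₀ ℕ)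
    (P Q : MvPolynomial (Fin n ⊕ Fin n) ℚ) :
    derivMonomial n e (applyDiffE n P Q) = applyDiffE n P (derivMonomial n e Q) := by
  simp only [applyDiffE, LinearMap.sum_apply, LinearMap.smul_apply, map_sum, map_smul]
  apply Finset.sum_congr rfl
  intro d _
  congr 1
  rw [← derivMonomial_add, ← derivMonomial_add, add_comm]

lemma applyDiff_comm (n : ℕ) (P R Q : MvPolynomial (Fin n ⊕ Fin n) ℚ) :
    applyDiff n P (applyDiff n R Q) = applyDiff n R (applyDiff n P Q) := by
  rw [← applyDiffE_apply n R (applyDiff n P Q), ← applyDiffE_apply n R Q, applyDiff, applyDiff,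
    map_sum]
  apply Finset.sum_congr rfl
  intro d _
  rw [map_smul, derivMonomial_applyDiffE]

lemma applyDiff_zero_right (n : ℕ) (P : MvPolynomial (Fin n ⊕ Fin n) ℚ) :
    applyDiff n P 0 = 0 := by
  simp [applyDiff]

lemma coeff_zero_applyDiff (n : ℕ) (P Q : MvPolynomial (Fin n ⊕ Fin n) ℚ) :
    coeff 0 (applyDiff n P Q) =
      ∑ d ∈ P.support, (dfact d 0 : ℚ) * (coeff d P * coeff d Q) := by
  rw [applyDiff, MvPolynomial.coeff_sum]
  apply Finset.sum_congr rfl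
  intro d _
  rw [MvPolynomial.coeff_smul, coeff_derivMonomial, zero_add, smul_eq_mul]
  ring

lemma flip_injOn (n : ℕ) (Δ : MvPolynomial (Fin n ⊕ Fin n) ℚ) :
    ∀ P ∈ derivSpan n Δ, applyDiff n P Δ = 0 → P = 0 := by
  intro P hP h0
  rw [← range_flipL] at hP
  obtain ⟨R, hR⟩ := hP
  have key : applyDiff n P P = 0 := by
    nth_rewrite 2 [← hR]
    rw [flipL_apply, applyDiff_comm, h0, applyDiff_zero_right]
  have hz : ∑ d ∈ P.support, (dfact d 0 : ℚ) * (coeff d P * coeff d P) = 0 := by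
    rw [← coeff_zero_applyDiff, key, MvPolynomial.coeff_zero]
  have hnn : ∀ d ∈ P.support, (0:ℚ) ≤ (dfact d 0 : ℚ) * (coeff d P * coeff d P) :=
    fun d _ => mul_nonneg (Nat.cast_nonneg _) (mul_self_nonneg _)
  have hall := (Finset.sum_eq_zero_iff_of_nonneg hnn).mp hz
  ext d
  rw [MvPolynomial.coeff_zero]
  by_contra hd
  have hds : d ∈ P.support := MvPolynomial.mem_support_iff.mpr hd
  have h1 := hall d hds
  have hq : ((dfact d 0 : ℚ)) ≠ 0 := Nat.cast_ne_zero.mpr (dfact_pos d 0).ne'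
  rcases mul_eq_zero.mp h1 with h | h
  · exact hq h
  · exact hd (mul_self_eq_zero.mp h)

lemma xdeg_add (n : ℕ) (e d : (Fin n ⊕ Fin n) →₀ ℕ) :
    xdeg n (e + d) = xdeg n e + xdeg n d := by
  rw [xdeg, xdeg, xdeg, ← Finset.sum_add_distrib]
  apply Finset.sum_congr rfl
  intro i _
  rw [Finsupp.add_apply]

lemma ydeg_add (n : ℕ) (e d : (Fin n ⊕ Fin n) →₀ ℕ) :
    ydeg n (e + d) = ydeg n e + ydeg n d := by
  rw [ydeg, ydeg, ydeg, ← Finset.sum_add_distrib]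
  apply Finset.sum_congr rfl
  intro i _
  rw [Finsupp.add_apply]

/-- The submodule of polynomials bihomogeneous of bidegree `(h, k)`. -/
noncomputable def biSub (n : ℕ) (h k : ℤ) : Submodule ℚ (MvPolynomial (Fin n ⊕ Fin n) ℚ) where
  carrier := {P | ∀ d, coeff d P ≠ 0 → (xdeg n d : ℤ) = h ∧ (ydeg n d : ℤ) = k}
  add_mem' := by
    intro P Q hP hQ d hd
    rw [MvPolynomial.coeff_add] at hd
    by_cases h1 : coeff d P ≠ 0
    · exact hP d h1
    · push_neg at h1
      exact hQ d (by rw [h1, zero_add] at hd; exact hd)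
  zero_mem' := by
    intro d hd
    simp at hd
  smul_mem' := by
    intro c P hP d hd
    rw [MvPolynomial.coeff_smul, smul_eq_mul] at hd
    exact hP d (right_ne_zero_of_mul hd)

lemma mem_biSub (n : ℕ) (h k : ℤ) (P : MvPolynomial (Fin n ⊕ Fin n) ℚ) :
    P ∈ biSub n h k ↔ ∀ d, coeff d P ≠ 0 → (xdeg n d : ℤ) = h ∧ (ydeg n d : ℤ) = k :=
  Iff.rfl

lemma biComponent_eq (n : ℕ) (h k : ℤ) (W : Submodule ℚ (MvPolynomial (Fin n ⊕ Fin n) ℚ)) :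
    biComponent n h k ↑W = ↑(W ⊓ biSub n h k) := by
  ext P
  simp only [biComponent, Set.mem_setOf_eq, SetLike.mem_coe, Submodule.mem_inf, mem_biSub]

lemma biSub_findim (n : ℕ) (h k : ℤ) : FiniteDimensional ℚ (biSub n h k) := by
  by_cases hh : 0 ≤ h ∧ 0 ≤ k
  · obtain ⟨h₀, rfl⟩ := Int.eq_ofNat_of_zero_le hh.1
    obtain ⟨k₀, rfl⟩ := Int.eq_ofNat_of_zero_le hh.2
    have hle : biSub n h₀ k₀ ≤ restrictTotalDegree (Fin n ⊕ Fin n) ℚ (h₀ + k₀) := by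
      intro P hP
      rw [mem_restrictTotalDegree]
      apply Finset.sup_le
      intro d hd
      obtain ⟨hx, hy⟩ := hP d (MvPolynomial.mem_support_iff.mp hd)
      have h1 : (d.sum fun _ e => e) = ∑ v ∈ d.support, d v := rfl
      have h2 : ∑ v ∈ d.support, d v ≤ ∑ v : Fin n ⊕ Fin n, d v :=
        Finset.sum_le_sum_of_subset (Finset.subset_univ _)
      have h3 : ∑ v : Fin n ⊕ Fin n, d v = xdeg n d + ydeg n d := by
        rw [Fintype.sum_sum_type, xdeg, ydeg]
      omega
    exact Submodule.finiteDimensional_of_le hle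
  · have hbot : biSub n h k = ⊥ := by
      rw [eq_bot_iff]
      intro P hP
      rw [Submodule.mem_bot]
      ext d
      rw [MvPolynomial.coeff_zero]
      by_contra hd
      obtain ⟨hx, hy⟩ := hP d hd
      omega
    rw [hbot]
    exact inferInstance

lemma derivMonomial_bideg {n a b : ℕ} {Δ : MvPolynomial (Fin n ⊕ Fin n) ℚ}
    (hbih : ∀ d, coeff d Δ ≠ 0 → xdeg n d = a ∧ ydeg n d = b)
    (d e : (Fin n ⊕ Fin n) →₀ ℕ) (h : coeff e (derivMonomial n d Δ) ≠ 0) :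
    (xdeg n e : ℤ) = (a : ℤ) - xdeg n d ∧ (ydeg n e : ℤ) = (b : ℤ) - ydeg n d := by
  rw [coeff_derivMonomial] at h
  have h2 : coeff (e + d) Δ ≠ 0 := fun hz => h (by rw [hz, mul_zero])
  obtain ⟨hx, hy⟩ := hbih _ h2
  rw [xdeg_add] at hx
  rw [ydeg_add] at hy
  omega

lemma flip_mapsTo {n a b : ℕ} {Δ : MvPolynomial (Fin n ⊕ Fin n) ℚ}
    (hbih : ∀ d, coeff d Δ ≠ 0 → xdeg n d = a ∧ ydeg n d = b) (h k : ℤ) :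
    ∀ P ∈ derivSpan n Δ ⊓ biSub n h k,
      applyDiff n P Δ ∈ derivSpan n Δ ⊓ biSub n ((a : ℤ) - h) ((b : ℤ) - k) := by
  intro P hP
  rw [Submodule.mem_inf] at hP ⊢
  constructor
  · rw [← range_flipL]
    exact ⟨P, rfl⟩
  · intro e he
    rw [applyDiff, MvPolynomial.coeff_sum] at he
    obtain ⟨d, hdmem, hdne⟩ := Finset.exists_ne_zero_of_sum_ne_zero he
    rw [MvPolynomial.coeff_smul, smul_eq_mul] at hdne
    have hcd : coeff d P ≠ 0 := left_ne_zero_of_mul hdne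
    have hce : coeff e (derivMonomial n d Δ) ≠ 0 := right_ne_zero_of_mul hdne
    obtain ⟨hx1, hy1⟩ := hP.2 d hcd
    obtain ⟨hx2, hy2⟩ := derivMonomial_bideg hbih d e hce
    omega

/-- Let `Δ ≠ 0` be bihomogeneous of bidegree `(a,b)` and let `M` be the span
of `Δ` and all its partial derivatives.  Then `flip : P ↦ P(∂)Δ` is a ℚ-linear
bijection of `M` onto `M` which maps each bihomogeneous component
`H_{h,k}(M)` bijectively onto `H_{a-h,b-k}(M)`; in particular those two
components have the same dimension, for all `h, k`. -/
theorem statement4 (n a b : ℕ) (Δ : MvPolynomial (Fin n ⊕ Fin n) ℚ)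
    (hΔ : Δ ≠ 0)
    (hbih : ∀ d, coeff d Δ ≠ 0 → xdeg n d = a ∧ ydeg n d = b) :
    (∀ P Q, applyDiff n (P + Q) Δ = applyDiff n P Δ + applyDiff n Q Δ) ∧
    (∀ (c : ℚ) (P : MvPolynomial (Fin n ⊕ Fin n) ℚ),
      applyDiff n (c • P) Δ = c • applyDiff n P Δ) ∧
    Set.BijOn (fun P => applyDiff n P Δ)
      ↑(derivSpan n Δ) ↑(derivSpan n Δ) ∧
    (∀ h k : ℤ, Set.BijOn (fun P => applyDiff n P Δ)
        (biComponent n h k ↑(derivSpan n Δ))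
        (biComponent n ((a : ℤ) - h) ((b : ℤ) - k) ↑(derivSpan n Δ))) ∧
    (∀ h k : ℤ,
      Set.finrank ℚ (biComponent n h k ↑(derivSpan n Δ)) =
        Set.finrank ℚ
          (biComponent n ((a : ℤ) - h) ((b : ℤ) - k) ↑(derivSpan n Δ))) := by
  classical
  set M := derivSpan n Δ with hM
  -- injectivity of `flip` on `M`
  have hinj : Set.InjOn (fun P => applyDiff n P Δ) ↑M := by
    intro P hP Q hQ hPQ
    have hsub : P - Q ∈ M := Submodule.sub_mem M hP hQ
    have h0 : applyDiff n (P - Q) Δ = 0 := by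
      have hPQ' : flipL n Δ P = flipL n Δ Q := hPQ
      have : flipL n Δ (P - Q) = 0 := by rw [map_sub, hPQ', sub_self]
      exact this
    have := flip_injOn n Δ (P - Q) hsub h0
    exact sub_eq_zero.mp this
  -- finite dimensionality of the bigraded pieces
  have hVfd : ∀ h k : ℤ, FiniteDimensional ℚ ↥(M ⊓ biSub n h k) := by
    intro h k
    haveI := biSub_findim n h k
    exact Submodule.finiteDimensional_of_le inf_le_right
  -- the restricted maps
  let F : ∀ h k : ℤ, ↥(M ⊓ biSub n h k) →ₗ[ℚ]
      ↥(M ⊓ biSub n ((a : ℤ) - h) ((b : ℤ) - k)) := fun h k =>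
    (flipL n Δ).restrict (flip_mapsTo hbih h k)
  have hFinj : ∀ h k : ℤ, Function.Injective (F h k) := by
    intro h k x y hxy
    apply Subtype.ext
    have hx : (x : MvPolynomial (Fin n ⊕ Fin n) ℚ) ∈ M := (Submodule.mem_inf.mp x.2).1
    have hy : (y : MvPolynomial (Fin n ⊕ Fin n) ℚ) ∈ M := (Submodule.mem_inf.mp y.2).1
    apply hinj hx hy
    have := congrArg Subtype.val hxy
    exact this
  have hfr : ∀ h k : ℤ,
      Module.finrank ℚ ↥(M ⊓ biSub n h k) =
        Module.finrank ℚ ↥(M ⊓ biSub n ((a : ℤ) - h) ((b : ℤ) - k)) := by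
    intro h k
    letI := hVfd h k
    letI := hVfd ((a : ℤ) - h) ((b : ℤ) - k)
    letI := hVfd ((a : ℤ) - ((a : ℤ) - h)) ((b : ℤ) - ((b : ℤ) - k))
    refine le_antisymm (LinearMap.finrank_le_finrank_of_injective (hFinj h k)) ?_
    have h2 := LinearMap.finrank_le_finrank_of_injective (hFinj ((a : ℤ) - h) ((b : ℤ) - k))
    rwa [sub_sub_cancel, sub_sub_cancel] at h2
  have hFsurj : ∀ h k : ℤ, Function.Surjective (F h k) := by
    intro h k
    letI := hVfd h k
    letI := hVfd ((a : ℤ) - h) ((b : ℤ) - k)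
    exact (LinearMap.injective_iff_surjective_of_finrank_eq_finrank (hfr h k)).mp (hFinj h k)
  -- conjunct 4 : bijection on the bigraded components
  have hcomp : ∀ h k : ℤ, Set.BijOn (fun P => applyDiff n P Δ)
      (biComponent n h k ↑M)
      (biComponent n ((a : ℤ) - h) ((b : ℤ) - k) ↑M) := by
    intro h k
    rw [biComponent_eq n h k M, biComponent_eq n _ _ M]
    refine ⟨?_, ?_, ?_⟩
    · intro P hP
      exact flip_mapsTo hbih h k P hP
    · exact hinj.mono fun x hx => (Submodule.mem_inf.mp hx).1
    · intro Q hQ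
      obtain ⟨x, hx⟩ := hFsurj h k ⟨Q, hQ⟩
      refine ⟨x.1, x.2, ?_⟩
      have := congrArg Subtype.val hx
      exact this
  -- conjunct 3 : bijection on all of `M`
  have hmap : M ≤ Submodule.map (flipL n Δ) M := by
    conv_lhs => rw [hM, derivSpan]
    rw [Submodule.span_le]
    rintro _ ⟨L, rfl⟩
    rw [foldr_pderiv_eq]
    set d := listCount n L with hd
    have hGmem : derivMonomial n d Δ ∈
        M ⊓ biSub n ((a : ℤ) - (xdeg n d : ℤ)) ((b : ℤ) - (ydeg n d : ℤ)) := by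
      rw [Submodule.mem_inf]
      constructor
      · rw [← foldr_pderiv_eq]
        exact Submodule.subset_span ⟨L, rfl⟩
      · intro e he
        exact derivMonomial_bideg hbih d e he
    obtain ⟨x, hx⟩ := hFsurj (xdeg n d) (ydeg n d) ⟨_, hGmem⟩
    refine Submodule.mem_map.mpr ⟨x.1, (Submodule.mem_inf.mp x.2).1, ?_⟩
    have := congrArg Subtype.val hx
    exact this
  refine ⟨fun P Q => applyDiff_add_left n P Q Δ, fun c P => applyDiff_smul_left n c P Δ,
    ⟨?_, hinj, ?_⟩, hcomp, ?_⟩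
  · intro P _
    have : applyDiff n P Δ ∈ M := by
      rw [hM, ← range_flipL]
      exact ⟨P, rfl⟩
    exact this
  · intro Q hQ
    obtain ⟨P, hPM, hPQ⟩ := hmap hQ
    exact ⟨P, hPM, hPQ⟩
  · intro h k
    have e1 : Set.finrank ℚ (biComponent n h k ↑M) =
        Module.finrank ℚ ↥(M ⊓ biSub n h k) := by
      rw [biComponent_eq n h k M, Set.finrank, Submodule.span_eq]
    have e2 : Set.finrank ℚ (biComponent n ((a : ℤ) - h) ((b : ℤ) - k) ↑M) =
        Module.finrank ℚ ↥(M ⊓ biSub n ((a : ℤ) - h) ((b : ℤ) - k)) := by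
      rw [biComponent_eq n _ _ M, Set.finrank, Submodule.span_eq]
    rw [e1, e2, hfr h k]
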